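/- Let ξ ∈ ℝ and let u⁺, u⁻ : ℝ → ℝ be three times continuously differentiable functions. Define the jumps [u] = u⁺(ξ) − u⁻(ξ), [u'] = (u⁺)'(ξ) − (u⁻)'(ξ), and [u''] = (u⁺)''(ξ) − (u⁻)''(ξ). Then there exist constants C > 0 and h₀ > 0 such that for all h ∈ (0, h₀] and all x ∈ [ξ − 1, ξ] with ξ < x + h, one has |(u⁻(x + h) + u⁺(x − h) − 2·u⁺(x))/h² + (1/h²)·([u] + [u']·(x + h − ξ) + (1/2)·[u'']·(x + h − ξ)²) − (u⁺)''(x)| ≤ C·h. -/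

import Mathlib

open Set

/-- Second-order Taylor remainder bound on a compact interval for a `C³` function. -/
lemma taylor2_bound (f : ℝ → ℝ) (hf : ContDiff ℝ 3 f) (a b : ℝ) :
    ∃ M : ℝ, 0 ≤ M ∧ ∀ x₀ ∈ Set.Icc a b, ∀ x ∈ Set.Icc a b,
      |f x - f x₀ - deriv f x₀ * (x - x₀) - deriv (deriv f) x₀ * (x - x₀) ^ 2 / 2|
        ≤ M * |x - x₀| ^ 3 := by
  have hf2 : ContDiff ℝ 2 (deriv f) :=
    (contDiff_succ_iff_deriv.mp (by exact_mod_cast hf : ContDiff ℝ ((2 : ℕ) + 1) f)).2.2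
  have hf1 : ContDiff ℝ 1 (deriv (deriv f)) :=
    (contDiff_succ_iff_deriv.mp (by exact_mod_cast hf2 : ContDiff ℝ ((1 : ℕ) + 1) (deriv f))).2.2
  have hf0 : Continuous (deriv (deriv (deriv f))) :=
    ((contDiff_succ_iff_deriv.mp
      (by exact_mod_cast hf1 : ContDiff ℝ ((0 : ℕ) + 1) (deriv (deriv f)))).2.2).continuous
  have hder : ∀ t : ℝ, HasDerivAt f (deriv f t) t :=
    fun t => (hf.differentiable (by norm_num)).differentiableAt.hasDerivAt
  have hder2 : ∀ t : ℝ, HasDerivAt (deriv f) (deriv (deriv f) t) t :=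
    fun t => (hf2.differentiable (by norm_num)).differentiableAt.hasDerivAt
  have hder3 : ∀ t : ℝ, HasDerivAt (deriv (deriv f)) (deriv (deriv (deriv f)) t) t :=
    fun t => (hf1.differentiable (by norm_num)).differentiableAt.hasDerivAt
  obtain ⟨M0, hM0⟩ := isCompact_Icc.exists_bound_of_continuousOn
    (s := Set.Icc a b) hf0.continuousOn
  refine ⟨max M0 0, le_max_right _ _, ?_⟩
  intro x₀ hx₀ x hx
  set M := max M0 0 with hM
  -- auxiliary function
  set g : ℝ → ℝ := fun t =>
    f x - f t - deriv f t * (x - t) - deriv (deriv f) t * (x - t) ^ 2 / 2 with hg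
  have hgd : ∀ t : ℝ, HasDerivAt g (-(deriv (deriv (deriv f)) t) * (x - t) ^ 2 / 2) t := by
    intro t
    have hxt : HasDerivAt (fun t : ℝ => x - t) (-1) t := (hasDerivAt_id t).const_sub x
    have h0 : HasDerivAt (fun t : ℝ => f x - f t) (-(deriv f t)) t := (hder t).const_sub (f x)
    have h1 : HasDerivAt (fun t : ℝ => deriv f t * (x - t))
        (deriv (deriv f) t * (x - t) + deriv f t * (-1)) t := (hder2 t).mul hxt
    have hsq : HasDerivAt (fun t : ℝ => (x - t) ^ 2) (2 * (x - t) ^ 1 * (-1)) t := hxt.pow 2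
    have h2 : HasDerivAt (fun t : ℝ => deriv (deriv f) t * (x - t) ^ 2 / 2)
        ((deriv (deriv (deriv f)) t * (x - t) ^ 2
          + deriv (deriv f) t * (2 * (x - t) ^ 1 * (-1))) / 2) t :=
      ((hder3 t).mul hsq).div_const 2
    have := (h0.sub h1).sub h2
    convert this using 1
    · rfl
    · rfl
    · rfl
    ring
  have hsub : Set.uIcc x₀ x ⊆ Set.Icc a b := Set.uIcc_subset_Icc hx₀ hx
  have hC : ∀ t ∈ Set.uIcc x₀ x,
      ‖-(deriv (deriv (deriv f)) t) * (x - t) ^ 2 / 2‖ ≤ M * |x - x₀| ^ 2 := by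
    intro t ht
    have h3 : |deriv (deriv (deriv f)) t| ≤ M := le_trans (hM0 t (hsub ht)) (le_max_left _ _)
    have htt : |x - t| ≤ |x - x₀| := by
      rw [Set.mem_uIcc] at ht
      rcases ht with ⟨h1, h2⟩ | ⟨h1, h2⟩ <;> rw [abs_le] <;> constructor <;>
        linarith [le_abs_self (x - x₀), neg_abs_le (x - x₀), abs_nonneg (x - x₀)]
    have h4 : (x - t) ^ 2 ≤ |x - x₀| ^ 2 := by
      have := sq_abs (x - t)
      nlinarith [abs_nonneg (x - t), abs_nonneg (x - x₀)]
    have h5 : (0 : ℝ) ≤ (x - t) ^ 2 := sq_nonneg _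
    rw [Real.norm_eq_abs, abs_div, abs_mul, abs_neg]
    have : |(x - t) ^ 2| = (x - t) ^ 2 := abs_of_nonneg h5
    rw [this]
    have hM0' : (0 : ℝ) ≤ M := le_max_right _ _
    calc |deriv (deriv (deriv f)) t| * (x - t) ^ 2 / |2|
        ≤ M * |x - x₀| ^ 2 / |2| := by
          apply div_le_div_of_nonneg_right ?_ (by norm_num)
          · nlinarith [abs_nonneg (deriv (deriv (deriv f)) t)]
      _ ≤ M * |x - x₀| ^ 2 := by
          rw [abs_two]
          nlinarith [abs_nonneg (x - x₀)]
  have hmvt := Convex.norm_image_sub_le_of_norm_hasDerivWithin_le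
    (fun t ht => (hgd t).hasDerivWithinAt) hC (convex_uIcc x₀ x)
    Set.right_mem_uIcc Set.left_mem_uIcc
  have hgx : g x = 0 := by simp [hg]
  rw [hgx, sub_zero, Real.norm_eq_abs, Real.norm_eq_abs] at hmvt
  calc |f x - f x₀ - deriv f x₀ * (x - x₀) - deriv (deriv f) x₀ * (x - x₀) ^ 2 / 2|
      = |g x₀| := by rw [hg]
    _ ≤ M * |x - x₀| ^ 2 * |x₀ - x| := hmvt
    _ = M * |x - x₀| ^ 3 := by rw [abs_sub_comm x₀ x]; ring

theorem stmt14 (ξ : ℝ) (up um : ℝ → ℝ) (hup : ContDiff ℝ 3 up) (hum : ContDiff ℝ 3 um) :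
    ∃ C : ℝ, 0 < C ∧ ∃ h₀ : ℝ, 0 < h₀ ∧
      ∀ h : ℝ, 0 < h → h ≤ h₀ →
        ∀ x ∈ Set.Icc (ξ - 1) ξ, ξ < x + h →
          |(um (x + h) + up (x - h) - 2 * up x) / h ^ 2 +
              (1 / h ^ 2) *
                ((up ξ - um ξ) + (deriv up ξ - deriv um ξ) * (x + h - ξ) +
                  (1 / 2) * (deriv (deriv up) ξ - deriv (deriv um) ξ) * (x + h - ξ) ^ 2) -
              deriv (deriv up) x| ≤ C * h := by
  obtain ⟨Mp, hMp0, hMp⟩ := taylor2_bound up hup (ξ - 2) (ξ + 1)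
  obtain ⟨Mm, hMm0, hMm⟩ := taylor2_bound um hum (ξ - 2) (ξ + 1)
  refine ⟨3 * Mp + Mm + 1, by linarith, 1, one_pos, ?_⟩
  intro h hh hh1 x hx hξ
  obtain ⟨hx1, hx2⟩ := hx
  have hxm : x ∈ Set.Icc (ξ - 2) (ξ + 1) := ⟨by linarith, by linarith⟩
  have hxph : x + h ∈ Set.Icc (ξ - 2) (ξ + 1) := ⟨by linarith, by linarith⟩
  have hxmh : x - h ∈ Set.Icc (ξ - 2) (ξ + 1) := ⟨by linarith, by linarith⟩
  have hξm : ξ ∈ Set.Icc (ξ - 2) (ξ + 1) := ⟨by linarith, by linarith⟩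
  have hδpos : 0 < x + h - ξ := by linarith
  have hδle : x + h - ξ ≤ h := by linarith
  -- Taylor remainders
  have hR1 := hMp x hxm (x + h) hxph
  have hR2 := hMp x hxm (x - h) hxmh
  have hR3p := hMp ξ hξm (x + h) hxph
  have hR3m := hMm ξ hξm (x + h) hxph
  have e1 : x + h - x = h := by ring
  have e2 : x - h - x = -h := by ring
  rw [e1, abs_of_pos hh] at hR1
  rw [e2, abs_neg, abs_of_pos hh] at hR2
  rw [abs_of_pos hδpos] at hR3p hR3m
  have hδ3 : (x + h - ξ) ^ 3 ≤ h ^ 3 := pow_le_pow_left₀ hδpos.le hδle 3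
  have hR3p' : |up (x + h) - up ξ - deriv up ξ * (x + h - ξ)
      - deriv (deriv up) ξ * (x + h - ξ) ^ 2 / 2| ≤ Mp * h ^ 3 :=
    le_trans hR3p (mul_le_mul_of_nonneg_left hδ3 hMp0)
  have hR3m' : |um (x + h) - um ξ - deriv um ξ * (x + h - ξ)
      - deriv (deriv um) ξ * (x + h - ξ) ^ 2 / 2| ≤ Mm * h ^ 3 :=
    le_trans hR3m (mul_le_mul_of_nonneg_left hδ3 hMm0)
  set R1 := up (x + h) - up x - deriv up x * h - deriv (deriv up) x * h ^ 2 / 2 with hR1def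
  set R2 := up (x - h) - up x - deriv up x * (-h) - deriv (deriv up) x * (-h) ^ 2 / 2 with hR2def
  set R3p := up (x + h) - up ξ - deriv up ξ * (x + h - ξ)
      - deriv (deriv up) ξ * (x + h - ξ) ^ 2 / 2 with hR3pdef
  set R3m := um (x + h) - um ξ - deriv um ξ * (x + h - ξ)
      - deriv (deriv um) ξ * (x + h - ξ) ^ 2 / 2 with hR3mdef
  have hne : h ^ 2 ≠ 0 := by positivity
  have hE : (um (x + h) + up (x - h) - 2 * up x) / h ^ 2 +
      (1 / h ^ 2) *
        ((up ξ - um ξ) + (deriv up ξ - deriv um ξ) * (x + h - ξ) +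
          (1 / 2) * (deriv (deriv up) ξ - deriv (deriv um) ξ) * (x + h - ξ) ^ 2) -
      deriv (deriv up) x = (R1 + R2 + (R3m - R3p)) / h ^ 2 := by
    rw [hR1def, hR2def, hR3pdef, hR3mdef]
    field_simp
    ring
  rw [hE, abs_div, abs_of_pos (by positivity : (0:ℝ) < h ^ 2)]
  rw [div_le_iff₀ (by positivity : (0:ℝ) < h ^ 2)]
  have habs : |R1 + R2 + (R3m - R3p)| ≤ |R1| + |R2| + (|R3m| + |R3p|) :=
    le_trans (abs_add_le _ _) (add_le_add (abs_add_le _ _) (abs_sub _ _))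
  have h3 : h * h ^ 2 = h ^ 3 := by ring
  have hp3 : 0 < h ^ 3 := by positivity
  linarith
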